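/- Let k ∈ ℕ and c ∈ ℝ with c ≠ 0. Let f(t) = −(k+1)/(t^{k+1} + c) (which is real-analytic in a neighborhood of 0 and satisfies f'(t) = t^k·f(t)² there), and let g_m = f^{(m)}(0)/m! be its m-th Taylor coefficient at 0. Define z(n) = Σ_{m=0}^{n} g_m · n!/(n−m)!. Then for every n ∈ ℕ: z(n+1) − z(n) = n! · Σ_{(j_1,j_2) ∈ ℕ², j_1+j_2 ≤ n−k} (−1)^{j_1+j_2+n−k} · z(j_1)·z(j_2) / (j_1! · j_2! · (n−k−j_1−j_2)!), where the right-hand side is the empty sum 0 when n < k. -/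

import Mathlib

open Finset PowerSeries

/-- The Taylor coefficients of f(t) = -(k+1)/(t^{k+1}+c) at 0. -/
noncomputable def riccatiCoeff (k : ℕ) (c : ℝ) : ℕ → ℝ :=
  fun n => if (k+1) ∣ n then (-((k:ℝ)+1)/c) * (-1/c)^(n/(k+1)) else 0

theorem riccati_hasPS (k : ℕ) (c : ℝ) (hc : c ≠ 0)
    (f : ℝ → ℝ) (hf : ∀ t : ℝ, f t = -((k : ℝ) + 1) / (t ^ (k + 1) + c)) :
    HasFPowerSeriesOnBall f
      (FormalMultilinearSeries.ofScalars ℝ (riccatiCoeff k c)) 0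
      (ENNReal.ofReal (min 1 |c|)) := by
  have hcpos : (0:ℝ) < |c| := abs_pos.mpr hc
  have hrpos : (0:ℝ) < min 1 |c| := lt_min one_pos hcpos
  constructor
  · -- r ≤ radius
    apply le_trans ?_ ((FormalMultilinearSeries.ofScalars ℝ (riccatiCoeff k c)).le_radius_of_bound
      (((k:ℝ)+1)/|c|) (r := (min 1 |c|).toNNReal) ?_)
    · rw [ENNReal.ofReal]
    · intro n
      rw [FormalMultilinearSeries.ofScalars_norm]
      rcases em ((k+1) ∣ n) with ⟨j, rfl⟩ | hdvd
      · have hj : (k+1)*j/(k+1) = j := Nat.mul_div_cancel_left _ (Nat.succ_pos k)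
        rw [riccatiCoeff]
        simp only [dvd_mul_right, if_true, hj]
        have h1 : ‖-((k:ℝ)+1)/c * (-1/c)^j‖ = (((k:ℝ)+1)/|c|) * (1/|c|)^j := by
          simp only [norm_mul, norm_div, norm_pow, norm_neg, norm_one, Real.norm_eq_abs]
          rw [abs_of_nonneg (by positivity : (0:ℝ) ≤ (k:ℝ)+1)]
        rw [h1]
        have hr1 : ((min 1 |c|).toNNReal : ℝ) = min 1 |c| := Real.coe_toNNReal _ hrpos.le
        rw [hr1]
        have hrle1 : min 1 |c| ≤ 1 := min_le_left _ _
        have hrlec : min 1 |c| ≤ |c| := min_le_right _ _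
        have key : (1/|c|)^j * (min 1 |c|)^((k+1)*j) ≤ 1 := by
          rw [pow_mul, ← mul_pow]
          apply pow_le_one₀ (by positivity)
          rw [div_mul_eq_mul_div, one_mul, div_le_one hcpos]
          calc (min 1 |c|)^(k+1) ≤ (min 1 |c|)^1 :=
                pow_le_pow_of_le_one hrpos.le hrle1 (by omega)
            _ = min 1 |c| := pow_one _
            _ ≤ |c| := hrlec
        calc ((k:ℝ)+1)/|c| * (1/|c|)^j * (min 1 |c|)^((k+1)*j)
            = ((k:ℝ)+1)/|c| * ((1/|c|)^j * (min 1 |c|)^((k+1)*j)) := by ring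
          _ ≤ ((k:ℝ)+1)/|c| * 1 := by
              apply mul_le_mul_of_nonneg_left key (by positivity)
          _ = ((k:ℝ)+1)/|c| := mul_one _
      · rw [riccatiCoeff]; simp only [hdvd, if_false]
        simp only [norm_zero, zero_mul]
        positivity
  · exact ENNReal.ofReal_pos.mpr hrpos
  · intro y hy
    rw [EMetric.mem_ball, edist_zero_right, ← ofReal_norm,
      ENNReal.ofReal_lt_ofReal_iff hrpos] at hy
    rw [Real.norm_eq_abs] at hy
    have hy1 : |y| < 1 := lt_of_lt_of_le hy (min_le_left _ _)
    have hyc : |y| < |c| := lt_of_lt_of_le hy (min_le_right _ _)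
    simp only [FormalMultilinearSeries.ofScalars_apply_eq, smul_eq_mul, zero_add]
    have habs : |(-y^(k+1)/c)| < 1 := by
      rw [abs_div, abs_neg, abs_pow, div_lt_one hcpos]
      calc |y|^(k+1) ≤ |y|^1 := pow_le_pow_of_le_one (abs_nonneg y) hy1.le (by omega)
        _ = |y| := pow_one _
        _ < |c| := hyc
    have hgeo := (hasSum_geometric_of_abs_lt_one habs).mul_left (-((k:ℝ)+1)/c)
    have habs' : |y^(k+1)| < |c| := by
      rw [abs_pow]
      calc |y|^(k+1) ≤ |y|^1 := pow_le_pow_of_le_one (abs_nonneg y) hy1.le (by omega)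
        _ = |y| := pow_one _
        _ < |c| := hyc
    have hne : y^(k+1) + c ≠ 0 := by
      intro h
      have h2 : y^(k+1) = -c := by linarith
      rw [h2, abs_neg] at habs'
      exact lt_irrefl _ habs'
    have hval : (-((k:ℝ)+1)/c) * (1 - (-y^(k+1)/c))⁻¹ = f y := by
      rw [hf y, show (1:ℝ) - (-y^(k+1)/c) = (y^(k+1)+c)/c by field_simp; ring, inv_div,
        div_mul_div_comm]
      rw [div_eq_div_iff (by exact mul_ne_zero hc hne) hne]
      ring
    rw [hval] at hgeo
    -- reindex
    have hinj : Function.Injective (fun j => (k+1)*j : ℕ → ℕ) := by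
      intro a b h; simpa using Nat.eq_of_mul_eq_mul_left (Nat.succ_pos k) h
    rw [← Function.Injective.hasSum_iff hinj ?_]
    · convert hgeo using 2 with j
      · rfl
      rw [Function.comp_apply]
      rw [riccatiCoeff]
      simp only [dvd_mul_right, if_true, Nat.mul_div_cancel_left _ (Nat.succ_pos k)]
      rw [pow_mul, show (-y^(k+1)/c) = (-1/c) * y^(k+1) by ring, mul_pow]
      ring
    · intro n hn
      rw [riccatiCoeff]
      have : ¬ (k+1) ∣ n := by
        intro ⟨j, hj⟩; exact hn ⟨j, by simp [hj]⟩
      simp [this]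

theorem riccati_iteratedDeriv (k : ℕ) (c : ℝ) (hc : c ≠ 0)
    (f : ℝ → ℝ) (hf : ∀ t : ℝ, f t = -((k : ℝ) + 1) / (t ^ (k + 1) + c)) (m : ℕ) :
    iteratedDeriv m f 0 = (Nat.factorial m : ℝ) * riccatiCoeff k c m := by
  have h := (riccati_hasPS k c hc f hf).factorial_smul (1:ℝ) m
  rw [FormalMultilinearSeries.ofScalars_apply_eq] at h
  rw [iteratedDeriv_eq_iteratedFDeriv, ← h]
  simp [smul_eq_mul]

/-- The coefficient recurrence from the ODE. -/
theorem riccati_rec (k : ℕ) (c : ℝ) (hc : c ≠ 0) (p : ℕ) :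
    ((p:ℝ)+1) * riccatiCoeff k c (p+1) =
      if k ≤ p then ∑ i ∈ range (p-k+1), riccatiCoeff k c i * riccatiCoeff k c (p-k-i)
      else 0 := by
  set B : ℝ := -((k:ℝ)+1)/c with hB
  by_cases hkp : k ≤ p
  · rw [if_pos hkp]
    set q := p - k with hq
    by_cases hdvd : (k+1) ∣ (p+1)
    · obtain ⟨J, hJ⟩ := hdvd
      have hJ1 : 1 ≤ J := by nlinarith [hJ]
      obtain ⟨Q, rfl⟩ : ∃ Q, J = Q + 1 := ⟨J - 1, by omega⟩
      have hJ' : p + 1 = (k+1)*Q + k + 1 := by rw [hJ]; ring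
      have hqQ : q = (k+1)*Q := by omega
      -- RHS: only multiples of (k+1) contribute
      have hsub : image (fun t => (k+1)*t) (range (Q+1)) ⊆ range (q+1) := by
        intro x hx
        simp only [mem_image, mem_range] at hx ⊢
        obtain ⟨t, ht, rfl⟩ := hx
        have : (k+1)*t ≤ (k+1)*Q := Nat.mul_le_mul_left _ (by omega)
        omega
      rw [← Finset.sum_subset hsub ?zero]
      case zero =>
        intro x hx hnx
        simp only [mem_image, mem_range] at hx hnx
        have : ¬ (k+1) ∣ x := by
          intro ⟨t, ht⟩
          have htQ : t ≤ Q := by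
            by_contra hh
            have : (k+1)*Q < (k+1)*t :=
              Nat.mul_lt_mul_of_le_of_lt (le_refl (k+1)) (by omega) (Nat.succ_pos k)
            omega
          exact hnx ⟨t, by omega, by omega⟩
        rw [riccatiCoeff]
        simp [this]
      rw [Finset.sum_image (by intro a _ b _ h; exact Nat.eq_of_mul_eq_mul_left (Nat.succ_pos k) h)]
      have hterm : ∀ t ∈ range (Q+1),
          riccatiCoeff k c ((k+1)*t) * riccatiCoeff k c (q - (k+1)*t) = B^2 * (-1/c)^Q := by
        intro t ht
        simp only [mem_range] at ht
        have hbridge : (k+1)*t + (k+1)*(Q-t) = (k+1)*Q := by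
          rw [← Nat.mul_add]; congr 1; omega
        have h1 : q - (k+1)*t = (k+1)*(Q-t) := by omega
        rw [riccatiCoeff, riccatiCoeff, h1]
        simp only [dvd_mul_right, if_true, Nat.mul_div_cancel_left _ (Nat.succ_pos k)]
        have hpow : ((-1:ℝ)/c)^t * ((-1:ℝ)/c)^(Q-t) = ((-1:ℝ)/c)^Q := by
          rw [← pow_add]; congr 1; omega
        rw [← hpow]; ring
      rw [Finset.sum_congr rfl hterm, Finset.sum_const, card_range, nsmul_eq_mul]
      have hc1 : riccatiCoeff k c (p+1) = B * (-1/c)^(Q+1) := by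
        rw [riccatiCoeff, if_pos ⟨Q+1, hJ⟩, hJ, Nat.mul_div_cancel_left _ (Nat.succ_pos k)]
      rw [hc1]
      have hp1 : ((p:ℝ)+1) = ((k:ℝ)+1) * ((Q:ℝ)+1) := by
        have h := congrArg (Nat.cast : ℕ → ℝ) hJ
        push_cast at h
        linarith
      rw [hp1, pow_succ, hB]
      field_simp
      push_cast; ring
    · -- no multiple: both sides vanish
      have hz : riccatiCoeff k c (p+1) = 0 := by rw [riccatiCoeff, if_neg hdvd]
      rw [hz, mul_zero]
      symm
      apply Finset.sum_eq_zero
      intro i hi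
      simp only [mem_range] at hi
      by_cases h1 : (k+1) ∣ i
      · have h2 : ¬ (k+1) ∣ (q - i) := by
          intro h2
          apply hdvd
          have : q - i + i = q := by omega
          have hq2 : (k+1) ∣ q := by rw [← this]; exact Nat.dvd_add h2 h1
          have : p + 1 = q + (k+1) := by omega
          rw [this]; exact Nat.dvd_add hq2 ⟨1, by ring⟩
        rw [riccatiCoeff, riccatiCoeff, if_neg h2, mul_zero]
      · rw [riccatiCoeff, if_neg h1, zero_mul]
  · rw [if_neg hkp]
    have : ¬ (k+1) ∣ (p+1) := by
      intro ⟨t, ht⟩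
      rcases Nat.eq_zero_or_pos t with rfl | h
      · omega
      · nlinarith
    rw [riccatiCoeff, if_neg this, mul_zero]

theorem riccati_conv (g : ℕ → ℝ) (z : ℕ → ℝ)
    (hz : ∀ j : ℕ, z j = ∑ m ∈ Finset.range (j + 1), g m * (Nat.descFactorial j m : ℝ))
    (N : ℕ) :
    ∑ s ∈ range (N+1), ((-1:ℝ)^(N-s)/(Nat.factorial (N-s) : ℝ)) *
        (∑ i ∈ range (s+1), (z i / (Nat.factorial i : ℝ)) * (z (s-i) / (Nat.factorial (s-i) : ℝ)))
      = ∑ q ∈ range (N+1), (∑ i ∈ range (q+1), g i * g (q-i)) * (1/(Nat.factorial (N-q) : ℝ)) := by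
  set Z : PowerSeries ℝ := PowerSeries.mk (fun j => z j / (Nat.factorial j : ℝ)) with hZdef
  set G : PowerSeries ℝ := PowerSeries.mk g with hGdef
  have hcoeff_exp : ∀ v : ℕ, (PowerSeries.coeff v) (PowerSeries.exp ℝ)
      = 1 / (Nat.factorial v : ℝ) := by
    intro v
    rw [PowerSeries.coeff_exp]
    push_cast
    simp
  have hcoeff_nexp : ∀ v : ℕ, (PowerSeries.coeff v) (PowerSeries.evalNegHom (PowerSeries.exp ℝ))
      = (-1:ℝ)^v * (1 / (Nat.factorial v : ℝ)) := by
    intro v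
    rw [PowerSeries.evalNegHom, PowerSeries.coeff_rescale, hcoeff_exp]
  have hZ : Z = G * PowerSeries.exp ℝ := by
    ext j
    rw [PowerSeries.coeff_mk, PowerSeries.coeff_mul,
      Finset.Nat.sum_antidiagonal_eq_sum_range_succ_mk]
    rw [hz j, Finset.sum_div]
    apply Finset.sum_congr rfl
    intro m hm
    simp only [mem_range] at hm
    rw [PowerSeries.coeff_mk, hcoeff_exp]
    have hmj : m ≤ j := by omega
    have hfac : ((Nat.factorial (j - m) : ℝ)) * (Nat.descFactorial j m : ℝ)
        = (Nat.factorial j : ℝ) := by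
      rw [← Nat.cast_mul, Nat.factorial_mul_descFactorial hmj]
    have h1 : (Nat.factorial j : ℝ) ≠ 0 := Nat.cast_ne_zero.mpr (Nat.factorial_ne_zero j)
    have h2 : (Nat.factorial (j-m) : ℝ) ≠ 0 := Nat.cast_ne_zero.mpr (Nat.factorial_ne_zero _)
    have h3 : (Nat.descFactorial j m : ℝ) / (Nat.factorial j : ℝ)
        = 1 / (Nat.factorial (j-m) : ℝ) := by
      rw [div_eq_div_iff h1 h2]
      linarith [hfac]
    rw [mul_div_assoc, h3]
  have hprod : Z * Z * PowerSeries.evalNegHom (PowerSeries.exp ℝ) = G * G * PowerSeries.exp ℝ := by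
    rw [hZ]
    have h1 : PowerSeries.exp ℝ * PowerSeries.evalNegHom (PowerSeries.exp ℝ) = 1 :=
      PowerSeries.exp_mul_exp_neg_eq_one
    calc G * exp ℝ * (G * exp ℝ) * evalNegHom (exp ℝ)
        = G * G * exp ℝ * (exp ℝ * evalNegHom (exp ℝ)) := by ring
      _ = G * G * exp ℝ := by rw [h1, mul_one]
  have hL : (PowerSeries.coeff N) (Z * Z * PowerSeries.evalNegHom (PowerSeries.exp ℝ))
      = ∑ s ∈ range (N+1), ((-1:ℝ)^(N-s)/(Nat.factorial (N-s) : ℝ)) *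
        (∑ i ∈ range (s+1), (z i / (Nat.factorial i : ℝ)) * (z (s-i) / (Nat.factorial (s-i) : ℝ))) := by
    rw [PowerSeries.coeff_mul, Finset.Nat.sum_antidiagonal_eq_sum_range_succ_mk]
    apply Finset.sum_congr rfl
    intro s hs
    rw [hcoeff_nexp, PowerSeries.coeff_mul, Finset.Nat.sum_antidiagonal_eq_sum_range_succ_mk]
    simp only [hZdef, PowerSeries.coeff_mk]
    ring
  have hR : (PowerSeries.coeff N) (G * G * PowerSeries.exp ℝ)
      = ∑ q ∈ range (N+1), (∑ i ∈ range (q+1), g i * g (q-i)) * (1/(Nat.factorial (N-q) : ℝ)) := by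
    rw [PowerSeries.coeff_mul, Finset.Nat.sum_antidiagonal_eq_sum_range_succ_mk]
    apply Finset.sum_congr rfl
    intro q hq
    rw [hcoeff_exp, PowerSeries.coeff_mul, Finset.Nat.sum_antidiagonal_eq_sum_range_succ_mk]
    simp only [hGdef, PowerSeries.coeff_mk]
  rw [← hL, ← hR, hprod]

/-- A nonlinear example: the interpolating transform of the Taylor coefficients of
f(t) = −(k+1)/(t^{k+1}+c) is an exact solution of the nonlocal recurrence representing
z' = t^k·z² on the integer lattice. -/
theorem discrete_riccati_example (k : ℕ) (c : ℝ) (hc : c ≠ 0)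
    (f : ℝ → ℝ) (hf : ∀ t : ℝ, f t = -((k : ℝ) + 1) / (t ^ (k + 1) + c))
    (g : ℕ → ℝ) (hg : ∀ m : ℕ, g m = iteratedDeriv m f 0 / (Nat.factorial m : ℝ))
    (z : ℕ → ℝ)
    (hz : ∀ n : ℕ, z n = ∑ m ∈ Finset.range (n + 1), g m * (Nat.descFactorial n m : ℝ)) :
    ∀ n : ℕ,
      z (n + 1) - z n =
        (Nat.factorial n : ℝ) *
          ∑ j ∈ (Finset.range (n + 1) ×ˢ Finset.range (n + 1)).filter
              (fun j => j.1 + j.2 + k ≤ n),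
            (-1 : ℝ) ^ (j.1 + j.2 + (n - k)) * z j.1 * z j.2 /
              ((Nat.factorial j.1 : ℝ) * (Nat.factorial j.2 : ℝ) *
                (Nat.factorial (n - k - j.1 - j.2) : ℝ)) := by
  intro n
  have hfact : ∀ m : ℕ, (Nat.factorial m : ℝ) ≠ 0 :=
    fun m => Nat.cast_ne_zero.mpr (Nat.factorial_ne_zero m)
  have hga : ∀ m : ℕ, g m = riccatiCoeff k c m := by
    intro m
    rw [hg m, riccati_iteratedDeriv k c hc f hf m, mul_comm, mul_div_assoc,
      div_self (hfact m), mul_one]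
  have hrec : ∀ p : ℕ, ((p:ℝ)+1) * g (p+1) =
      if k ≤ p then ∑ i ∈ Finset.range (p-k+1), g i * g (p-k-i) else 0 := by
    intro p
    simp only [hga]
    exact riccati_rec k c hc p
  -- Step 1: difference formula
  have hzn : ∑ i ∈ range n, g (i+1) * (Nat.descFactorial n (i+1) : ℝ)
      = ∑ i ∈ range (n+1), g (i+1) * (Nat.descFactorial n (i+1) : ℝ) := by
    rw [Finset.sum_range_succ]
    rw [Nat.descFactorial_eq_zero_iff_lt.mpr (Nat.lt_succ_self n)]
    simp
  have hdiff : z (n+1) - z n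
      = ∑ p ∈ Finset.range (n+1), ((p:ℝ)+1) * g (p+1) * (Nat.descFactorial n p : ℝ) := by
    rw [hz (n+1), hz n,
      Finset.sum_range_succ' (fun m => g m * (Nat.descFactorial (n+1) m : ℝ)) (n+1),
      Finset.sum_range_succ' (fun m => g m * (Nat.descFactorial n m : ℝ)) n]
    simp only [Nat.descFactorial_zero, Nat.cast_one, mul_one]
    rw [add_sub_add_right_eq_sub, hzn, ← Finset.sum_sub_distrib]
    apply Finset.sum_congr rfl
    intro i hi
    simp only [mem_range] at hi
    have hi' : i ≤ n := by omega
    rw [Nat.succ_descFactorial_succ, Nat.descFactorial_succ]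
    push_cast [Nat.cast_sub hi']
    ring
  rw [hdiff]
  have hdiff2 : ∑ p ∈ Finset.range (n+1), ((p:ℝ)+1) * g (p+1) * (Nat.descFactorial n p : ℝ)
      = ∑ p ∈ Finset.range (n+1),
          (if k ≤ p then ∑ i ∈ Finset.range (p-k+1), g i * g (p-k-i) else 0)
            * (Nat.descFactorial n p : ℝ) := by
    apply Finset.sum_congr rfl
    intro p _
    rw [← hrec p]
  rw [hdiff2]
  by_cases hkn : k ≤ n
  · set N := n - k with hN
    -- LHS reindex
    have himg : image (fun q => q + k) (range (N+1)) ⊆ range (n+1) := by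
      intro x hx
      simp only [mem_image, mem_range] at hx ⊢
      obtain ⟨q, hq, rfl⟩ := hx
      omega
    have hLHS : ∑ p ∈ Finset.range (n+1),
          (if k ≤ p then ∑ i ∈ Finset.range (p-k+1), g i * g (p-k-i) else 0)
            * (Nat.descFactorial n p : ℝ)
        = ∑ q ∈ range (N+1),
            (∑ i ∈ Finset.range (q+1), g i * g (q-i)) * (Nat.descFactorial n (q+k) : ℝ) := by
      rw [← Finset.sum_subset himg ?zero]
      case zero =>
        intro x hx hnx
        simp only [mem_image, mem_range] at hx hnx
        push_neg at hnx
        have : ¬ k ≤ x := by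
          intro hkx
          exact hnx (x - k) (by omega) (by omega)
        rw [if_neg this, zero_mul]
      rw [Finset.sum_image (by intro a _ b _ h; simp only at h; omega)]
      apply Finset.sum_congr rfl
      intro q hq
      rw [if_pos (Nat.le_add_left k q), Nat.add_sub_cancel]
    rw [hLHS]
    have hflat : ∑ j ∈ (Finset.range (n + 1) ×ˢ Finset.range (n + 1)).filter
              (fun j => j.1 + j.2 + k ≤ n),
            (-1 : ℝ) ^ (j.1 + j.2 + (n - k)) * z j.1 * z j.2 /
              ((Nat.factorial j.1 : ℝ) * (Nat.factorial j.2 : ℝ) *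
                (Nat.factorial (n - k - j.1 - j.2) : ℝ))
        = ∑ s ∈ range (N+1), ((-1:ℝ)^(N-s)/(Nat.factorial (N-s) : ℝ)) *
            (∑ i ∈ range (s+1), (z i / (Nat.factorial i : ℝ)) *
              (z (s-i) / (Nat.factorial (s-i) : ℝ))) := by
      simp only [Finset.mul_sum]
      rw [Finset.sum_sigma' (range (N+1)) (fun s => range (s+1))
        (fun s i => ((-1:ℝ)^(N-s)/(Nat.factorial (N-s) : ℝ)) *
          ((z i / (Nat.factorial i : ℝ)) * (z (s-i) / (Nat.factorial (s-i) : ℝ))))]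
      apply Finset.sum_nbij' (i := fun p : ℕ × ℕ => (⟨p.1 + p.2, p.1⟩ : Σ _ : ℕ, ℕ))
        (j := fun x : Σ _ : ℕ, ℕ => ((x.2, x.1 - x.2) : ℕ × ℕ))
      · intro p hp
        simp only [mem_filter, mem_product, mem_range] at hp
        simp only [mem_sigma, mem_range]
        omega
      · intro x hx
        simp only [mem_sigma, mem_range] at hx
        simp only [mem_filter, mem_product, mem_range]
        omega
      · intro p hp
        simp only [mem_filter, mem_product, mem_range] at hp
        simp only [Nat.add_sub_cancel_left]
      · intro x hx
        simp only [mem_sigma, mem_range] at hx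
        have : x.2 + (x.1 - x.2) = x.1 := by omega
        exact Sigma.ext this (by simp)
      · intro p hp
        simp only [mem_filter, mem_product, mem_range] at hp
        have hsN : p.1 + p.2 ≤ N := by omega
        have hsign : (-1:ℝ) ^ (p.1 + p.2 + (n - k)) = (-1:ℝ) ^ (N - (p.1 + p.2)) := by
          rw [← hN, show p.1 + p.2 + N = (N - (p.1 + p.2)) + 2*(p.1+p.2) by omega,
            pow_add, pow_mul, neg_one_sq, one_pow, mul_one]
        have hden : n - k - p.1 - p.2 = N - (p.1 + p.2) := by omega
        rw [hsign, hden, Nat.add_sub_cancel_left]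
        ring
    rw [hflat, riccati_conv g z hz N, Finset.mul_sum]
    apply Finset.sum_congr rfl
    intro q hq
    simp only [mem_range] at hq
    have hqk : q + k ≤ n := by omega
    have hfd : Nat.factorial (n - (q+k)) * Nat.descFactorial n (q+k) = Nat.factorial n :=
      Nat.factorial_mul_descFactorial hqk
    have hNq : n - (q+k) = N - q := by omega
    rw [hNq] at hfd
    have hdesc : (Nat.descFactorial n (q+k) : ℝ)
        = (Nat.factorial n : ℝ) / (Nat.factorial (N-q) : ℝ) := by
      rw [eq_div_iff (hfact _), ← Nat.cast_mul, mul_comm, hfd]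
    rw [hdesc]
    ring
  · -- n < k : both sides vanish
    have hempty : (Finset.range (n + 1) ×ˢ Finset.range (n + 1)).filter
        (fun j => j.1 + j.2 + k ≤ n) = ∅ := by
      ext x
      simp only [mem_filter, mem_product, mem_range, Finset.notMem_empty, iff_false]
      push_neg
      intro _
      omega
    rw [hempty, Finset.sum_empty, mul_zero]
    apply Finset.sum_eq_zero
    intro p hp
    simp only [mem_range] at hp
    rw [if_neg (by omega), zero_mul]
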